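/- Let μ be Lebesgue measure on [0,1] and let p, q ∈ ℕ with p ≤ q. There exists a sequence (G_n)_{n∈ℕ} of Borel subsets of [0,1] such that: (i) μ(G_i) = p/(q·i) for all i; (ii) for every finite strictly increasing sequence i₁ < i₂ < ⋯ < i_n of naturals, μ(G_{i₁} ∩ G_{i₂} ∩ ⋯ ∩ G_{i_n}) = p^n/(q^n · i_n); and (iii) μ(limsup_{n→∞} G_n) = 0. -/

import Mathlib

open MeasureTheory Filter
open scoped ENNReal

open MeasureTheory Filter
open scoped ENNReal

namespace Stmt7

noncomputable def aF (q : ℕ) : ℕ → ℕ → ℝ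
  | 0, _ => 0
  | n+1, m => aF q n (m / q) + ((m % q : ℕ) : ℝ) / (((n : ℝ)+1) * (q : ℝ)^(n+1))

lemma aF_zero (q m : ℕ) : aF q 0 m = 0 := rfl
lemma aF_succ (q n m : ℕ) :
    aF q (n+1) m = aF q n (m / q) + ((m % q : ℕ) : ℝ) / (((n : ℝ)+1) * (q : ℝ)^(n+1)) := rfl

lemma aF_nonneg (q : ℕ) : ∀ n m, 0 ≤ aF q n m
  | 0, _ => le_refl 0
  | n+1, m => add_nonneg (aF_nonneg q n _) (by positivity)

/-- interval length at level n -/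
noncomputable def len (q n : ℕ) : ℝ := 1 / ((n : ℝ) * (q : ℝ)^n)

lemma len_pos (q n : ℕ) (hq : 1 ≤ q) (hn : 1 ≤ n) : 0 < len q n := by
  have h1 : (0:ℝ) < q := by exact_mod_cast hq
  have h2 : (0:ℝ) < n := by exact_mod_cast hn
  unfold len; positivity

lemma len_nonneg (q n : ℕ) : 0 ≤ len q n := by
  unfold len; positivity

lemma q_large {q n m : ℕ} (h : m + 1 < q ^ n) : 2 ≤ q := by
  by_contra hc
  have hq1 : q ≤ 1 := by omega
  have : q ^ n ≤ 1 ^ n := Nat.pow_le_pow_left hq1 n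
  simp at this; omega

lemma succ_cases {q m : ℕ} (hq : 2 ≤ q) :
    ((m+1) % q = 0 ∧ m % q = q - 1 ∧ (m+1)/q = m/q + 1) ∨
    ((m+1) % q = m % q + 1 ∧ (m+1)/q = m/q) := by
  have h1 : (m+1) % q = (m % q + 1) % q := by
    rw [Nat.add_mod, Nat.mod_eq_of_lt (show 1 < q by omega)]
  have hmodlt : m % q < q := Nat.mod_lt _ (by omega)
  by_cases hlt : m % q + 1 < q
  · right
    constructor
    · rw [h1, Nat.mod_eq_of_lt hlt]
    · rw [Nat.succ_div, if_neg]
      · simp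
      · intro hd
        have := Nat.mod_eq_zero_of_dvd hd
        rw [h1, Nat.mod_eq_of_lt hlt] at this; omega
  · left
    have heq : m % q + 1 = q := by omega
    have hmod0 : (m+1) % q = 0 := by rw [h1, heq, Nat.mod_self]
    refine ⟨hmod0, by omega, ?_⟩
    rw [Nat.succ_div, if_pos (Nat.dvd_of_mod_eq_zero hmod0)]

lemma aF_gap (q : ℕ) : ∀ n m, m + 1 < q ^ n → aF q n m + len q n ≤ aF q n (m+1) := by
  intro n
  induction n with
  | zero => intro m h; simp at h
  | succ n ih =>
    intro m h
    have hq2 : 2 ≤ q := q_large h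
    have hq0 : (0:ℝ) < q := by exact_mod_cast (by omega : 0 < q)
    rw [aF_succ, aF_succ]
    have hlen1 : len q (n+1) = 1 / (((n:ℝ)+1) * (q:ℝ)^(n+1)) := by
      unfold len; push_cast; ring_nf
    rcases succ_cases (m := m) hq2 with ⟨hmod, hm, hdiv⟩ | ⟨hmod, hdiv⟩
    · -- carry case
      have hlt : (m+1)/q < q ^ n := by
        rw [Nat.div_lt_iff_lt_mul (by omega : 0 < q)]
        calc m + 1 < q ^ (n+1) := h
        _ = q ^ n * q := by ring
      have hge1 : 1 ≤ (m+1)/q := by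
        rw [Nat.one_le_div_iff (by omega : 0 < q)]; have h5 := Nat.mod_le m q; omega
      rcases Nat.eq_zero_or_pos n with hn0 | hn1
      · subst hn0; rw [pow_zero, Nat.lt_one_iff] at hlt; omega
      have h2 : m / q + 1 < q ^ n := hdiv ▸ hlt
      have ihs := ih (m/q) h2
      rw [hdiv, hmod]
      have hlen : len q n = 1 / ((n:ℝ) * (q:ℝ)^n) := rfl
      have hcast : ((m % q : ℕ) : ℝ) = (q:ℝ) - 1 := by
        rw [hm]; push_cast [Nat.cast_sub (show 1 ≤ q by omega)]; ring
      have hnpos : (0:ℝ) < n := by exact_mod_cast hn1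
      have key : ((q:ℝ) - 1) / (((n:ℝ)+1) * (q:ℝ)^(n+1)) + 1 / (((n:ℝ)+1) * (q:ℝ)^(n+1))
          ≤ 1 / ((n:ℝ) * (q:ℝ)^n) := by
        have e1 : ((q:ℝ) - 1) / (((n:ℝ)+1) * (q:ℝ)^(n+1)) + 1 / (((n:ℝ)+1) * (q:ℝ)^(n+1))
            = 1 / (((n:ℝ)+1) * (q:ℝ)^n) := by
          field_simp; ring
        rw [e1]
        apply one_div_le_one_div_of_le
        · positivity
        · have h3 : (0:ℝ) < (q:ℝ)^n := by positivity
          nlinarith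
      calc aF q n (m/q) + ((m % q : ℕ) : ℝ) / (((n:ℝ)+1) * (q:ℝ)^(n+1)) + len q (n+1)
          = aF q n (m/q) + (((q:ℝ) - 1) / (((n:ℝ)+1) * (q:ℝ)^(n+1))
            + 1 / (((n:ℝ)+1) * (q:ℝ)^(n+1))) := by rw [hcast, hlen1]; ring
        _ ≤ aF q n (m/q) + len q n := by rw [hlen]; linarith
        _ ≤ aF q n (m/q + 1) := ihs
        _ = aF q n (m/q + 1) + ((0:ℕ):ℝ) / (((n:ℝ)+1) * (q:ℝ)^(n+1)) := by
            push_cast; ring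
    · -- no carry
      rw [hdiv, hmod, hlen1]
      push_cast
      ring_nf
      linarith [le_refl (aF q n (m/q))]

lemma aF_mono_gap (q : ℕ) {n m1 m2 : ℕ} (h12 : m1 < m2) (h2 : m2 < q ^ n) :
    aF q n m1 + len q n ≤ aF q n m2 := by
  induction m2 with
  | zero => omega
  | succ m2 ih =>
    rcases Nat.lt_or_ge m1 m2 with hlt | hge
    · have := ih hlt (by omega)
      have h3 := aF_gap q n m2 h2
      have h4 := len_nonneg q n
      linarith
    · have : m1 = m2 := by omega
      subst this
      exact aF_gap q n m1 h2

lemma aF_nest_left (q : ℕ) {n N : ℕ} (h : n ≤ N) (m : ℕ) :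
    aF q n (m / q ^ (N - n)) ≤ aF q N m := by
  induction N generalizing m with
  | zero =>
    have : n = 0 := by omega
    subst this; simp
  | succ N ih =>
    rcases Nat.lt_or_ge N n with hlt | hge
    · have : n = N + 1 := by omega
      subst this; simp
    · have hdd : m / q ^ (N + 1 - n) = (m / q) / q ^ (N - n) := by
        rw [Nat.div_div_eq_div_mul]
        congr 1
        rw [← pow_succ']
        congr 1; omega
      rw [hdd]
      calc aF q n (m / q / q ^ (N - n)) ≤ aF q N (m / q) := ih hge (m / q)
        _ ≤ aF q (N+1) m := by
            rw [aF_succ]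
            have : (0:ℝ) ≤ ((m % q : ℕ) : ℝ) / (((N:ℝ)+1) * (q:ℝ)^(N+1)) := by positivity
            linarith

lemma aF_nest_right (q : ℕ) (hq : 1 ≤ q) {n N : ℕ} (hn : 1 ≤ n) (h : n ≤ N) {m : ℕ}
    (hm : m < q ^ N) :
    aF q N m + len q N ≤ aF q n (m / q ^ (N - n)) + len q n := by
  induction N generalizing m with
  | zero => omega
  | succ N ih =>
    have hq0 : (0:ℝ) < q := by exact_mod_cast hq
    rcases Nat.lt_or_ge N n with hlt | hge
    · have : n = N + 1 := by omega
      subst this; simp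
    · have hNpos : 1 ≤ N := le_trans hn hge
      have hNr : (1:ℝ) ≤ (N:ℝ) := by exact_mod_cast hNpos
      have hmq : m / q < q ^ N := by
        rw [Nat.div_lt_iff_lt_mul (by omega : 0 < q)]
        calc m < q ^ (N+1) := hm
        _ = q ^ N * q := by ring
      have h1 := ih hge hmq
      have hdd : m / q ^ (N + 1 - n) = (m / q) / q ^ (N - n) := by
        rw [Nat.div_div_eq_div_mul]
        congr 1
        rw [← pow_succ']
        congr 1; omega
      rw [hdd]
      have hmodlt : m % q < q := Nat.mod_lt _ (by omega)
      have hstep : aF q (N+1) m + len q (N+1) ≤ aF q N (m / q) + len q N := by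
        rw [aF_succ]
        have hlen1 : len q (N+1) = 1 / (((N:ℝ)+1) * (q:ℝ)^(N+1)) := by
          unfold len; push_cast; ring_nf
        have hlenN : len q N = 1 / ((N:ℝ) * (q:ℝ)^N) := rfl
        have hcast : ((m % q : ℕ) : ℝ) ≤ (q:ℝ) - 1 := by
          have h6 : (m % q : ℕ) + 1 ≤ q := hmodlt
          have : ((m % q : ℕ) : ℝ) + 1 ≤ (q : ℝ) := by exact_mod_cast h6
          linarith
        have key : ((q:ℝ) - 1) / (((N:ℝ)+1) * (q:ℝ)^(N+1)) + 1 / (((N:ℝ)+1) * (q:ℝ)^(N+1))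
            ≤ 1 / ((N:ℝ) * (q:ℝ)^N) := by
          have e1 : ((q:ℝ) - 1) / (((N:ℝ)+1) * (q:ℝ)^(N+1)) + 1 / (((N:ℝ)+1) * (q:ℝ)^(N+1))
              = 1 / (((N:ℝ)+1) * (q:ℝ)^N) := by
            field_simp; ring
          rw [e1]
          apply one_div_le_one_div_of_le
          · positivity
          · have h3 : (0:ℝ) < (q:ℝ)^N := by positivity
            nlinarith
        have hmono : ((m % q : ℕ) : ℝ) / (((N:ℝ)+1) * (q:ℝ)^(N+1))
            ≤ ((q:ℝ) - 1) / (((N:ℝ)+1) * (q:ℝ)^(N+1)) :=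
          div_le_div_of_nonneg_right hcast (by positivity)
        rw [hlen1, hlenN]
        linarith
      linarith

lemma aF_add_len_le_one (q : ℕ) (hq : 1 ≤ q) {n m : ℕ} (hn : 1 ≤ n) (hm : m < q ^ n) :
    aF q n m + len q n ≤ 1 := by
  have h1 := aF_nest_right q hq (le_refl 1) hn hm
  have hq0 : (0:ℝ) < q := by exact_mod_cast hq
  have h2 : aF q 1 (m / q ^ (n - 1)) + len q 1 ≤ 1 := by
    rw [aF_succ, aF_zero]
    have hmod : (m / q ^ (n-1)) % q < q := Nat.mod_lt _ (by omega)
    have hcr : (((m / q ^ (n-1)) % q : ℕ) : ℝ) + 1 ≤ (q:ℝ) := by exact_mod_cast hmod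
    have hlen : len q 1 = 1/(q:ℝ) := by unfold len; norm_num
    rw [hlen]
    norm_num
    rw [div_add' _ _ _ (ne_of_gt hq0), div_le_one hq0]
    rw [inv_mul_cancel₀ (ne_of_gt hq0)]
    linarith
  linarith

/-- the level-n interval with index m -/
noncomputable def iv (q n m : ℕ) : Set ℝ := Set.Ico (aF q n m) (aF q n m + len q n)

lemma iv_measurable (q n m : ℕ) : MeasurableSet (iv q n m) := measurableSet_Ico

lemma iv_disjoint (q : ℕ) {n m1 m2 : ℕ} (h1 : m1 < q ^ n) (h2 : m2 < q ^ n)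
    (hne : m1 ≠ m2) : Disjoint (iv q n m1) (iv q n m2) := by
  rw [Set.disjoint_left]
  rintro x ⟨ha, hb⟩ ⟨hc, hd⟩
  rcases Nat.lt_or_ge m1 m2 with hlt | hge
  · have := aF_mono_gap q hlt h2
    linarith
  · have hlt2 : m2 < m1 := by omega
    have := aF_mono_gap q hlt2 h1
    linarith

lemma iv_nest (q : ℕ) (hq : 1 ≤ q) {n N : ℕ} (hn : 1 ≤ n) (h : n ≤ N) {m : ℕ}
    (hm : m < q ^ N) : iv q N m ⊆ iv q n (m / q ^ (N - n)) := by
  rintro x ⟨ha, hb⟩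
  constructor
  · exact le_trans (aF_nest_left q h m) ha
  · have := aF_nest_right q hq hn h hm
    linarith

/-- the G sets -/
noncomputable def Gset (p q n : ℕ) : Set ℝ :=
  ⋃ m ∈ (Finset.range (q^n)).filter (fun m => m % q < p), iv q n m

lemma Gset_measurable (p q n : ℕ) : MeasurableSet (Gset p q n) :=
  (Finset.range (q^n) |>.filter _).measurableSet_biUnion (fun m _ => iv_measurable q n m)

lemma Gset_subset (p q n : ℕ) (hq : 1 ≤ q) : Gset p q n ⊆ Set.Icc 0 1 := by
  intro x hx
  simp only [Gset, Set.mem_iUnion] at hx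
  obtain ⟨m, hm, hx⟩ := hx
  simp only [Finset.mem_filter, Finset.mem_range] at hm
  rcases Nat.eq_zero_or_pos n with hn0 | hn1
  · exfalso
    subst hn0
    have : len q 0 = 0 := by unfold len; norm_num
    obtain ⟨ha, hb⟩ := hx
    rw [this] at hb
    linarith
  · obtain ⟨ha, hb⟩ := hx
    have h1 := aF_nonneg q n m
    have h2 := aF_add_len_le_one q hq hn1 hm.1
    exact ⟨by linarith, by linarith⟩

lemma vol_biUnion (q : ℕ) (hq : 1 ≤ q) {n : ℕ} (hn : 1 ≤ n) (T : Finset ℕ)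
    (hT : T ⊆ Finset.range (q^n)) :
    volume (⋃ m ∈ T, iv q n m) = T.card * ENNReal.ofReal (len q n) := by
  rw [measure_biUnion_finset]
  · have : ∀ m ∈ T, volume (iv q n m) = ENNReal.ofReal (len q n) := by
      intro m _
      rw [iv, Real.volume_Ico]
      congr 1
      ring
    rw [Finset.sum_congr rfl this, Finset.sum_const, nsmul_eq_mul]
  · intro m1 hm1 m2 hm2 hne
    have h1 := Finset.mem_range.mp (hT hm1)
    have h2 := Finset.mem_range.mp (hT hm2)
    exact iv_disjoint q h1 h2 hne
  · exact fun m _ => iv_measurable q n m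

lemma count_lemma (p q : ℕ) (hpq : p ≤ q) (hq : 1 ≤ q) :
    ∀ (N : ℕ) (K : Finset ℕ), K ⊆ Finset.range N →
      ((Finset.range (q^N)).filter (fun m => ∀ k ∈ K, (m / q^k) % q < p)).card
        = p ^ K.card * q ^ (N - K.card) := by
  intro N
  induction N with
  | zero =>
    intro K hK
    have hKe : K = ∅ := Finset.subset_empty.mp (by simpa using hK)
    subst hKe
    simp
  | succ N ih =>
    intro K hK
    set K' : Finset ℕ := (K.erase 0).image (· - 1) with hK'def
    have hmemK' : ∀ k', k' ∈ K' ↔ k' + 1 ∈ K := by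
      intro k'
      simp only [hK'def, Finset.mem_image, Finset.mem_erase]
      constructor
      · rintro ⟨k, ⟨hk0, hkK⟩, rfl⟩
        have : k - 1 + 1 = k := by omega
        rw [this]; exact hkK
      · intro h
        exact ⟨k' + 1, ⟨by omega, h⟩, by omega⟩
    have hK'sub : K' ⊆ Finset.range N := by
      intro k' hk'
      have := hK ((hmemK' k').mp hk')
      simp only [Finset.mem_range] at *
      omega
    have hinj : Set.InjOn (· - 1) (K.erase 0) := by
      intro a ha b hb hab
      simp only [Finset.coe_erase, Set.mem_diff] at ha hb
      have ha0 : a ≠ 0 := by simpa using ha.2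
      have hb0 : b ≠ 0 := by simpa using hb.2
      simp only at hab
      omega
    have hcardK' : K'.card = (K.erase 0).card := Finset.card_image_of_injOn hinj
    have hbij : ((Finset.range (q^(N+1))).filter (fun m => ∀ k ∈ K, (m / q^k) % q < p)).card
        = (((Finset.range q).filter (fun s => 0 ∈ K → s < p)) ×ˢ
           ((Finset.range (q^N)).filter (fun t => ∀ k ∈ K', (t / q^k) % q < p))).card := by
      apply Finset.card_bij' (fun m _ => (m % q, m / q)) (fun st _ => st.1 + q * st.2)
      · -- hi : maps into target
        intro m hm
        simp only [Finset.mem_filter, Finset.mem_range] at hm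
        obtain ⟨hmlt, hcond⟩ := hm
        simp only [Finset.mem_product, Finset.mem_filter, Finset.mem_range]
        refine ⟨⟨Nat.mod_lt _ (by omega), ?_⟩, ⟨?_, ?_⟩⟩
        · intro h0
          have := hcond 0 h0
          simpa using this
        · rw [Nat.div_lt_iff_lt_mul (by omega : 0 < q)]
          calc m < q ^ (N+1) := hmlt
          _ = q ^ N * q := by ring
        · intro k' hk'
          have hkK : k' + 1 ∈ K := (hmemK' k').mp hk'
          have := hcond (k'+1) hkK
          have hdd : m / q / q ^ k' = m / q ^ (k'+1) := by
            rw [Nat.div_div_eq_div_mul, ← pow_succ']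
          rw [hdd]
          exact this
      · -- hj : maps back
        rintro ⟨s, t⟩ hst
        simp only [Finset.mem_product, Finset.mem_filter, Finset.mem_range] at hst
        obtain ⟨⟨hs, hs0⟩, ⟨ht, htcond⟩⟩ := hst
        simp only [Finset.mem_filter, Finset.mem_range]
        constructor
        · calc s + q * t < q + q * t := by omega
          _ = q * (t + 1) := by ring
          _ ≤ q * q ^ N := by
              apply Nat.mul_le_mul_left
              omega
          _ = q ^ (N+1) := by rw [← pow_succ']
        · intro k hk
          match k with
          | 0 =>
            simp only [pow_zero, Nat.div_one]
            rw [Nat.add_mul_mod_self_left, Nat.mod_eq_of_lt hs]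
            exact hs0 hk
          | k'' + 1 =>
            have h1 : (s + q * t) / q = t := by
              rw [Nat.add_mul_div_left _ _ (by omega : 0 < q), Nat.div_eq_of_lt hs]
              omega
            have hdd : (s + q * t) / q ^ (k''+1) = t / q ^ k'' := by
              rw [pow_succ', ← Nat.div_div_eq_div_mul, h1]
            rw [hdd]
            exact htcond k'' ((hmemK' k'').mpr hk)
      · intro m hm
        simp only
        rw [Nat.mod_add_div]
      · rintro ⟨s, t⟩ hst
        simp only [Finset.mem_product, Finset.mem_filter, Finset.mem_range] at hst
        obtain ⟨⟨hs, _⟩, _⟩ := hst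
        have h1 : (s + q * t) / q = t := by
          rw [Nat.add_mul_div_left _ _ (by omega : 0 < q), Nat.div_eq_of_lt hs]
          omega
        have h2 : (s + q * t) % q = s := by
          rw [Nat.add_mul_mod_self_left, Nat.mod_eq_of_lt hs]
        simp only [h1, h2]
    rw [hbij, Finset.card_product, ih K' hK'sub]
    by_cases h0 : 0 ∈ K
    · have hA : ((Finset.range q).filter (fun s => 0 ∈ K → s < p)).card = p := by
        have : (Finset.range q).filter (fun s => 0 ∈ K → s < p) = Finset.range p := by
          ext s
          simp only [Finset.mem_filter, Finset.mem_range]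
          constructor
          · rintro ⟨_, h⟩; exact h h0
          · intro h; exact ⟨by omega, fun _ => h⟩
        rw [this, Finset.card_range]
      have hcK : 1 ≤ K.card := Finset.card_pos.mpr ⟨0, h0⟩
      have hce : (K.erase 0).card = K.card - 1 := by
        rw [Finset.card_erase_of_mem h0]
      have hKle : K.card ≤ N + 1 := by
        calc K.card ≤ (Finset.range (N+1)).card := Finset.card_le_card hK
        _ = N + 1 := Finset.card_range _
      rw [hA, hcardK', hce]
      have e1 : p * (p ^ (K.card - 1) * q ^ (N - (K.card - 1)))
          = p ^ K.card * q ^ (N + 1 - K.card) := by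
        have : N - (K.card - 1) = N + 1 - K.card := by omega
        rw [this]
        have : p * p ^ (K.card - 1) = p ^ K.card := by
          conv_rhs => rw [show K.card = (K.card - 1) + 1 by omega]
          rw [pow_succ]
          ring
        rw [← this]
        ring
      exact e1
    · have hA : ((Finset.range q).filter (fun s => 0 ∈ K → s < p)).card = q := by
        rw [Finset.filter_true_of_mem, Finset.card_range]
        intro s _
        intro h; exact absurd h h0
      have hce : K.erase 0 = K := Finset.erase_eq_of_notMem h0
      have hKle : K.card ≤ N := by
        have hsub : K ⊆ (Finset.range (N+1)).erase 0 := by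
          intro k hk
          rw [Finset.mem_erase]
          exact ⟨fun he => h0 (he ▸ hk), hK hk⟩
        calc K.card ≤ ((Finset.range (N+1)).erase 0).card := Finset.card_le_card hsub
        _ = N := by rw [Finset.card_erase_of_mem (by simp), Finset.card_range]; omega
      rw [hA, hcardK', hce]
      have e1 : q * (p ^ K.card * q ^ (N - K.card)) = p ^ K.card * q ^ (N + 1 - K.card) := by
        have h2 : N + 1 - K.card = (N - K.card) + 1 := by omega
        rw [h2, pow_succ]
        ring
      exact e1

lemma iInter_eq (p q : ℕ) (hq : 1 ≤ q) (n : ℕ) (i : Fin (n+1) → ℕ)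
    (hmono : StrictMono i) (h0 : 0 < i 0) :
    (⋂ j, Gset p q (i j)) =
      ⋃ m ∈ (Finset.range (q ^ (i (Fin.last n)))).filter
        (fun m => ∀ j, (m / q ^ (i (Fin.last n) - i j)) % q < p), iv q (i (Fin.last n)) m := by
  set N := i (Fin.last n) with hN
  have hjN : ∀ j, i j ≤ N := fun j => hmono.monotone (Fin.le_last j)
  have hj1 : ∀ j, 1 ≤ i j := fun j => h0.trans_le (hmono.monotone (Fin.zero_le j))
  have hN1 : 1 ≤ N := hj1 _
  ext x
  simp only [Set.mem_iInter, Set.mem_iUnion, Finset.mem_filter, Finset.mem_range, exists_prop]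
  constructor
  · intro hx
    have hxN := hx (Fin.last n)
    simp only [Gset, Set.mem_iUnion, Finset.mem_filter, Finset.mem_range, exists_prop] at hxN
    obtain ⟨m, ⟨hmlt, _⟩, hxm⟩ := hxN
    refine ⟨m, ⟨hmlt, ?_⟩, hxm⟩
    intro j
    have hxj := hx j
    simp only [Gset, Set.mem_iUnion, Finset.mem_filter, Finset.mem_range, exists_prop] at hxj
    obtain ⟨m', ⟨hm'lt, hm'p⟩, hxm'⟩ := hxj
    have hanc : m / q ^ (N - i j) < q ^ (i j) := by
      rw [Nat.div_lt_iff_lt_mul (Nat.pow_pos (by omega))]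
      calc m < q ^ N := hmlt
      _ = q ^ (i j) * q ^ (N - i j) := by rw [← pow_add]; congr 1; have := hjN j; omega
    have hxanc : x ∈ iv q (i j) (m / q ^ (N - i j)) :=
      iv_nest q hq (hj1 j) (hjN j) hmlt hxm
    by_contra hcon
    have hne : m' ≠ m / q ^ (N - i j) := by
      intro he; exact hcon (he ▸ hm'p)
    exact (iv_disjoint q hm'lt hanc hne).ne_of_mem hxm' hxanc rfl
  · rintro ⟨m, ⟨hmlt, hcond⟩, hxm⟩
    intro j
    simp only [Gset, Set.mem_iUnion, Finset.mem_filter, Finset.mem_range, exists_prop]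
    refine ⟨m / q ^ (N - i j), ⟨?_, ?_⟩, ?_⟩
    · rw [Nat.div_lt_iff_lt_mul (Nat.pow_pos (by omega))]
      calc m < q ^ N := hmlt
      _ = q ^ (i j) * q ^ (N - i j) := by rw [← pow_add]; congr 1; have := hjN j; omega
    · exact hcond j
    · exact iv_nest q hq (hj1 j) (hjN j) hmlt hxm

lemma le_apply_fin (n : ℕ) (i : Fin (n+1) → ℕ) (hmono : StrictMono i) (h0 : 0 < i 0) :
    ∀ (k : ℕ) (h : k < n + 1), k + 1 ≤ i ⟨k, h⟩ := by
  intro k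
  induction k with
  | zero => intro h; exact h0
  | succ k ihk =>
    intro h
    have h1 : k < n + 1 := by omega
    have h2 := ihk h1
    have h3 : i ⟨k, h1⟩ < i ⟨k+1, h⟩ := hmono (Fin.mk_lt_mk.mpr (Nat.lt_succ_self k))
    omega

lemma vol_iInter (p q : ℕ) (hpq : p ≤ q) (hq : 1 ≤ q) (n : ℕ) (i : Fin (n+1) → ℕ)
    (hmono : StrictMono i) (h0 : 0 < i 0) :
    volume (⋂ j, Gset p q (i j)) =
      (p : ℝ≥0∞) ^ (n + 1) / ((q : ℝ≥0∞) ^ (n + 1) * (i (Fin.last n))) := by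
  set N := i (Fin.last n) with hN
  have hjN : ∀ j, i j ≤ N := fun j => hmono.monotone (Fin.le_last j)
  have hj1 : ∀ j, 1 ≤ i j := fun j => h0.trans_le (hmono.monotone (Fin.zero_le j))
  have hN1 : 1 ≤ N := hj1 _
  have hNn : n + 1 ≤ N := by
    have := le_apply_fin n i hmono h0 n (by omega)
    have he : Fin.last n = ⟨n, by omega⟩ := rfl
    rw [hN, he]
    exact this
  rw [iInter_eq p q hq n i hmono h0]
  rw [vol_biUnion q hq hN1 _ (Finset.filter_subset _ _)]
  -- now compute the cardinality
  set K : Finset ℕ := Finset.image (fun j => N - i j) Finset.univ with hKdef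
  have hKmem : ∀ k, k ∈ K ↔ ∃ j, N - i j = k := by
    intro k; simp [hKdef]
  have hfilter_eq : (Finset.range (q ^ N)).filter (fun m => ∀ j, (m / q ^ (N - i j)) % q < p)
      = (Finset.range (q ^ N)).filter (fun m => ∀ k ∈ K, (m / q ^ k) % q < p) := by
    apply Finset.filter_congr
    intro m _
    constructor
    · intro h k hk
      obtain ⟨j, hj⟩ := (hKmem k).mp hk
      exact hj ▸ h j
    · intro h j
      exact h _ ((hKmem _).mpr ⟨j, rfl⟩)
  have hKsub : K ⊆ Finset.range N := by
    intro k hk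
    obtain ⟨j, hj⟩ := (hKmem k).mp hk
    rw [Finset.mem_range, ← hj]
    have h1 := hj1 j
    have h2 := hjN j
    omega
  have hKcard : K.card = n + 1 := by
    rw [hKdef, Finset.card_image_of_injective _ ?inj, Finset.card_univ, Fintype.card_fin]
    case inj =>
      intro j1 j2 he
      have he' : N - i j1 = N - i j2 := he
      have h1 := hjN j1
      have h2 := hjN j2
      have : i j1 = i j2 := by omega
      exact hmono.injective this
  rw [hfilter_eq, count_lemma p q hpq hq N K hKsub, hKcard]
  -- final arithmetic
  have hq0 : (0:ℝ) < q := by exact_mod_cast hq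
  have hN0 : (0:ℝ) < N := by exact_mod_cast hN1
  have hpow : (q:ℝ) ^ N = (q:ℝ) ^ (n+1) * (q:ℝ) ^ (N - (n+1)) := by
    rw [← pow_add]; congr 1; omega
  have hreal : ((p ^ (n+1) * q ^ (N - (n+1)) : ℕ) : ℝ) * len q N
      = (p:ℝ) ^ (n+1) / ((q:ℝ) ^ (n+1) * (N:ℝ)) := by
    unfold len
    push_cast
    rw [hpow]
    have h1 : (0:ℝ) < (q:ℝ) ^ (n+1) := by positivity
    have h2 : (0:ℝ) < (q:ℝ) ^ (N - (n+1)) := by positivity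
    field_simp
  have hlhs : (((Finset.range (q ^ N)).filter (fun m => ∀ k ∈ K, (m / q^k) % q < p)).card : ℝ≥0∞)
      = ((p ^ (n+1) * q ^ (N - (n+1)) : ℕ) : ℝ≥0∞) := by
    rw [count_lemma p q hpq hq N K hKsub, hKcard]
  calc ((p ^ (n+1) * q ^ (N - (n+1)) : ℕ) : ℝ≥0∞) * ENNReal.ofReal (len q N)
      = ENNReal.ofReal ((p ^ (n+1) * q ^ (N - (n+1)) : ℕ) : ℝ) * ENNReal.ofReal (len q N) := by
        rw [ENNReal.ofReal_natCast]
    _ = ENNReal.ofReal (((p ^ (n+1) * q ^ (N - (n+1)) : ℕ) : ℝ) * len q N) := by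
        rw [← ENNReal.ofReal_mul (by positivity)]
    _ = ENNReal.ofReal ((p:ℝ) ^ (n+1) / ((q:ℝ) ^ (n+1) * (N:ℝ))) := by rw [hreal]
    _ = (p : ℝ≥0∞) ^ (n + 1) / ((q : ℝ≥0∞) ^ (n + 1) * (N : ℝ≥0∞)) := by
        rw [ENNReal.ofReal_div_of_pos (by positivity)]
        congr 1
        · rw [ENNReal.ofReal_pow (by positivity), ENNReal.ofReal_natCast]
        · rw [ENNReal.ofReal_mul (by positivity)]
          congr 1
          · rw [ENNReal.ofReal_pow (by positivity), ENNReal.ofReal_natCast]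
          · exact ENNReal.ofReal_natCast N

lemma Gset_subset_H (p q : ℕ) (hq : 1 ≤ q) {n k : ℕ} (hn : 1 ≤ n) (hnk : n ≤ k) :
    Gset p q k ⊆ ⋃ m ∈ Finset.range (q ^ n), iv q n m := by
  intro x hx
  simp only [Gset, Set.mem_iUnion, Finset.mem_filter, Finset.mem_range, exists_prop] at hx ⊢
  obtain ⟨m, ⟨hmlt, _⟩, hxm⟩ := hx
  refine ⟨m / q ^ (k - n), ?_, iv_nest q hq hn hnk hmlt hxm⟩
  rw [Nat.div_lt_iff_lt_mul (Nat.pow_pos (by omega))]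
  calc m < q ^ k := hmlt
  _ = q ^ n * q ^ (k - n) := by rw [← pow_add]; congr 1; omega

lemma vol_limsup (p q : ℕ) (hq : 1 ≤ q) :
    volume (limsup (Gset p q) atTop) = 0 := by
  have key : ∀ n : ℕ, 1 ≤ n → volume (limsup (Gset p q) atTop) ≤ (n : ℝ≥0∞)⁻¹ := by
    intro n hn
    have hsub : limsup (Gset p q) atTop ⊆ ⋃ m ∈ Finset.range (q ^ n), iv q n m := by
      rw [limsup_eq_iInf_iSup_of_nat]
      refine le_trans (iInf_le _ n) ?_
      refine iSup_le fun k => iSup_le fun hk => ?_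
      exact Gset_subset_H p q hq hn hk
    calc volume (limsup (Gset p q) atTop) ≤ volume (⋃ m ∈ Finset.range (q ^ n), iv q n m) :=
          measure_mono hsub
      _ ≤ ∑ m ∈ Finset.range (q ^ n), volume (iv q n m) := measure_biUnion_finset_le _ _
      _ = (q ^ n : ℕ) * ENNReal.ofReal (len q n) := by
          have : ∀ m ∈ Finset.range (q ^ n), volume (iv q n m) = ENNReal.ofReal (len q n) := by
            intro m _
            rw [iv, Real.volume_Ico]
            congr 1; ring
          rw [Finset.sum_congr rfl this, Finset.sum_const, nsmul_eq_mul, Finset.card_range]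
      _ = (n : ℝ≥0∞)⁻¹ := by
          have hq0 : (0:ℝ) < q := by exact_mod_cast hq
          have hn0 : (0:ℝ) < n := by exact_mod_cast hn
          have hr : ((q ^ n : ℕ) : ℝ) * len q n = (n:ℝ)⁻¹ := by
            unfold len
            push_cast
            field_simp
          calc ((q ^ n : ℕ) : ℝ≥0∞) * ENNReal.ofReal (len q n)
              = ENNReal.ofReal ((q ^ n : ℕ) : ℝ) * ENNReal.ofReal (len q n) := by
                rw [ENNReal.ofReal_natCast]
            _ = ENNReal.ofReal (((q ^ n : ℕ) : ℝ) * len q n) := by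
                rw [← ENNReal.ofReal_mul (by positivity)]
            _ = ENNReal.ofReal ((n:ℝ)⁻¹) := by rw [hr]
            _ = (n : ℝ≥0∞)⁻¹ := by
                rw [ENNReal.ofReal_inv_of_pos hn0, ENNReal.ofReal_natCast]
  refine le_antisymm ?_ zero_le
  refine ge_of_tendsto ENNReal.tendsto_inv_nat_nhds_zero ?_
  filter_upwards [eventually_ge_atTop 1] with n hn
  exact key n hn

theorem main (p q : ℕ) (hp : 0 < p) (hpq : p ≤ q) :
    ∃ G : ℕ → Set ℝ,
      (∀ i, MeasurableSet (G i)) ∧ (∀ i, G i ⊆ Set.Icc 0 1) ∧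
      (∀ i : ℕ, 0 < i → volume (G i) = (p : ℝ≥0∞) / ((q : ℝ≥0∞) * i)) ∧
      (∀ (n : ℕ) (i : Fin (n + 1) → ℕ), StrictMono i → 0 < i 0 →
        volume (⋂ j, G (i j)) =
          (p : ℝ≥0∞) ^ (n + 1) / ((q : ℝ≥0∞) ^ (n + 1) * (i (Fin.last n)))) ∧
      volume (limsup G atTop) = 0 := by
  have hq : 1 ≤ q := le_trans hp hpq
  refine ⟨Gset p q, fun i => Gset_measurable p q i, fun i => Gset_subset p q i hq, ?_, ?_, vol_limsup p q hq⟩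
  · intro i hi
    have hsm : StrictMono (fun _ : Fin (0+1) => i) := by
      intro a b hab
      exfalso
      have ha := a.isLt
      have hb := b.isLt
      have hlt : (a:ℕ) < (b:ℕ) := hab
      omega
    have h := vol_iInter p q hpq hq 0 (fun _ => i) hsm hi
    simp only [Set.iInter_const] at h  -- careful
    rw [h]
    simp [pow_one]
  · intro n i hmono h0
    exact vol_iInter p q hpq hq n i hmono h0

end Stmt7

theorem stmt_7 (p q : ℕ) (hp : 0 < p) (hpq : p ≤ q) :
    ∃ G : ℕ → Set ℝ,
      (∀ i, MeasurableSet (G i)) ∧ (∀ i, G i ⊆ Set.Icc 0 1) ∧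
      (∀ i : ℕ, 0 < i → volume (G i) = (p : ℝ≥0∞) / ((q : ℝ≥0∞) * i)) ∧
      (∀ (n : ℕ) (i : Fin (n + 1) → ℕ), StrictMono i → 0 < i 0 →
        volume (⋂ j, G (i j)) =
          (p : ℝ≥0∞) ^ (n + 1) / ((q : ℝ≥0∞) ^ (n + 1) * (i (Fin.last n)))) ∧
      volume (limsup G atTop) = 0 := by
  exact Stmt7.main p q hp hpq
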